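/- Let H = F₁ ∪ F₂ ∪ ... ∪ F_k be a spanning subgraph of a graph G, where each F_i is a spanning forest of G \ (F₁ ∪ ... ∪ F_{i-1}) (i.e., each F_i is a maximal spanning forest of the remaining edges). Then for every cut (S, V\S), the number of edges of H crossing the cut is at least min(k, the number of edges of G crossing the cut). In particular, G is k-edge-connected if and only if H is k-edge-connected. -/
import Mathlib

open Finset
open scoped Classical

/-- Number of edges of `G` crossing the cut `(S, V \ S)`. -/
noncomputable def cutSize {V : Type*} [Fintype V] [DecidableEq V]
    (G : SimpleGraph V) (S : Finset V) : ℕ :=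
  ((S ×ˢ Sᶜ).filter fun p => G.Adj p.1 p.2).card

/-- `G` is `k`-edge-connected: it is connected and every proper nonempty cut has at
least `k` crossing edges. -/
def IsKEdgeConnected {V : Type*} [Fintype V] [DecidableEq V]
    (k : ℕ) (G : SimpleGraph V) : Prop :=
  G.Connected ∧ ∀ S : Finset V, S.Nonempty → S ≠ Finset.univ → k ≤ cutSize G S

/-- `F` is a spanning forest of `G`: a maximal acyclic subgraph of `G`. -/
def IsSpanningForestOf {V : Type*} (F G : SimpleGraph V) : Prop :=
  F ≤ G ∧ F.IsAcyclic ∧ ∀ F' : SimpleGraph V, F ≤ F' → F' ≤ G → F'.IsAcyclic → F' = F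

section Aux

variable {V : Type*}

/-- A walk from inside `S` to outside `S` uses a crossing edge. -/
lemma walk_crossing {F : SimpleGraph V} {S : Finset V} :
    ∀ {u v : V}, F.Walk u v → u ∈ S → v ∉ S → ∃ p q, p ∈ S ∧ q ∉ S ∧ F.Adj p q := by
  intro u v w
  induction w with
  | nil => intro h h'; exact absurd h h'
  | @cons a b c h p ih =>
    intro hu hv
    by_cases hb : b ∈ S
    · exact ih hb hv
    · exact ⟨a, b, hu, hb, h⟩

/-- Endpoints of any edge of `G` are connected in a maximal spanning forest of `G`. -/
lemma forest_reach {F G : SimpleGraph V} (h : IsSpanningForestOf F G)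
    {u v : V} (huv : G.Adj u v) : F.Reachable u v := by
  obtain ⟨hle, hac, hmax⟩ := h
  by_contra hr
  have hnadj : ¬ F.Adj u v := fun h' => hr h'.reachable
  set F' : SimpleGraph V := F ⊔ SimpleGraph.fromEdgeSet {s(u, v)} with hF'def
  have hF'adj : F'.Adj u v := by
    refine Or.inr ?_
    rw [SimpleGraph.fromEdgeSet_adj]
    exact ⟨Set.mem_singleton _, huv.ne⟩
  have hF'le : F' ≤ G := by
    refine sup_le hle ?_
    intro a b hab
    rw [SimpleGraph.fromEdgeSet_adj, Set.mem_singleton_iff, Sym2.eq_iff] at hab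
    rcases hab.1 with ⟨rfl, rfl⟩ | ⟨rfl, rfl⟩
    · exact huv
    · exact huv.symm
  have hdel : F' \ SimpleGraph.fromEdgeSet {s(u, v)} ≤ F := by
    intro a b hab
    rw [SimpleGraph.sdiff_adj] at hab
    rcases hab.1 with h' | h'
    · exact h'
    · exact absurd h' hab.2
  have hac' : F'.IsAcyclic := by
    intro a c hc
    by_cases he : s(u, v) ∈ c.edges
    · have h2 := SimpleGraph.adj_and_reachable_delete_edges_iff_exists_cycle.mpr ⟨a, c, hc, he⟩
      exact hr (h2.2.mono hdel)
    · have hsub : ∀ e ∈ c.edges, e ∈ F.edgeSet := by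
        intro e hce
        have h1 := c.edges_subset_edgeSet hce
        rw [hF'def, SimpleGraph.edgeSet_sup] at h1
        rcases h1 with h1 | h1
        · exact h1
        · rw [SimpleGraph.edgeSet_fromEdgeSet, Set.mem_diff, Set.mem_singleton_iff] at h1
          exact absurd (h1.1 ▸ hce) he
      exact hac (c.transfer F hsub) (hc.transfer hsub)
  have := hmax F' le_sup_left hF'le hac'
  rw [this] at hF'adj
  exact hnadj hF'adj

lemma forest_crossing [Fintype V] [DecidableEq V] {F G : SimpleGraph V}
    (h : IsSpanningForestOf F G) {S : Finset V} {u v : V}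
    (hu : u ∈ S) (hv : v ∉ S) (huv : G.Adj u v) :
    ∃ p q, p ∈ S ∧ q ∉ S ∧ F.Adj p q := by
  obtain ⟨w⟩ := forest_reach h huv
  exact walk_crossing w hu hv

lemma cutSize_mono [Fintype V] [DecidableEq V] {G₁ G₂ : SimpleGraph V}
    (h : G₁ ≤ G₂) (S : Finset V) : cutSize G₁ S ≤ cutSize G₂ S := by
  apply Finset.card_le_card
  intro p hp
  rw [Finset.mem_filter] at hp ⊢
  exact ⟨hp.1, h hp.2⟩

end Aux

/-- Nagamochi–Ibaraki: if `H = F₁ ∪ ⋯ ∪ F_k` where each `Fᵢ` is a spanning forest of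
`G` minus the previous forests, then every cut of `H` has at least
`min(k, cut size in G)` crossing edges; in particular `G` is `k`-edge-connected iff
`H` is. -/
theorem stmt_4 {V : Type*} [Fintype V] [DecidableEq V] [Nonempty V]
    (G : SimpleGraph V) (k : ℕ) (hk : 1 ≤ k) (F : Fin k → SimpleGraph V)
    (hF : ∀ i : Fin k,
      IsSpanningForestOf (F i) (G \ (⨆ j : Fin k, ⨆ _ : j < i, F j)))
    (H : SimpleGraph V) (hH : H = ⨆ i, F i) :
    (∀ S : Finset V, min k (cutSize G S) ≤ cutSize H S) ∧
      (IsKEdgeConnected k G ↔ IsKEdgeConnected k H) := by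
  -- the union of the first `n` forests
  set U : ℕ → SimpleGraph V := fun n => ⨆ j : Fin k, ⨆ _ : (j : ℕ) < n, F j with hUdef
  have hUadj : ∀ n a b, (U n).Adj a b ↔ ∃ j : Fin k, (j : ℕ) < n ∧ (F j).Adj a b := by
    intro n a b
    simp [hUdef, SimpleGraph.iSup_adj]
  have hUF : ∀ i : Fin k, IsSpanningForestOf (F i) (G \ U (i : ℕ)) := by
    intro i
    have h1 : (⨆ j : Fin k, ⨆ _ : j < i, F j) = U (i : ℕ) := by
      simp only [hUdef, Fin.lt_def]
    exact h1 ▸ hF i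
  have hUmono : ∀ m n, m ≤ n → U m ≤ U n := by
    intro m n hmn a b hab
    rw [hUadj] at hab ⊢
    obtain ⟨j, hj, hadj⟩ := hab
    exact ⟨j, lt_of_lt_of_le hj hmn, hadj⟩
  have hHU : H = U k := by
    rw [hH]
    ext a b
    rw [SimpleGraph.iSup_adj, hUadj]
    exact ⟨fun ⟨j, hj⟩ => ⟨j, j.isLt, hj⟩, fun ⟨j, _, hj⟩ => ⟨j, hj⟩⟩
  have hHle : H ≤ G := by
    rw [hH]
    refine iSup_le fun i => le_trans (hF i).1 ?_
    intro a b hab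
    exact ((SimpleGraph.sdiff_adj _ _ _ _).mp hab).1
  -- main counting argument
  have key : ∀ S : Finset V, ∀ n, n ≤ k → min n (cutSize G S) ≤ cutSize (U n) S := by
    intro S n
    induction n with
    | zero => intro _; simp
    | succ n ih =>
      intro hn1
      have hn : n < k := hn1
      have ihn := ih (Nat.le_of_lt hn)
      by_cases hres : ∃ u v, u ∈ S ∧ v ∉ S ∧ (G \ U n).Adj u v
      · obtain ⟨u, v, hu, hv, huv⟩ := hres
        obtain ⟨p, q, hp, hq, hadj⟩ :=
          forest_crossing (F := F ⟨n, hn⟩) (hUF ⟨n, hn⟩) hu hv huv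
        have hpq_new : ¬ (U n).Adj p q := fun hc =>
          (((SimpleGraph.sdiff_adj _ _ _ _).mp ((hUF ⟨n, hn⟩).1 hadj)).2) hc
        have hstep : cutSize (U n) S + 1 ≤ cutSize (U (n + 1)) S := by
          have hnotmem : (p, q) ∉ (S ×ˢ Sᶜ).filter fun x => (U n).Adj x.1 x.2 := by
            rw [Finset.mem_filter]
            exact fun hx => hpq_new hx.2
          have hsub : insert (p, q) ((S ×ˢ Sᶜ).filter fun x => (U n).Adj x.1 x.2) ⊆
              (S ×ˢ Sᶜ).filter fun x => (U (n + 1)).Adj x.1 x.2 := by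
            intro x hx
            rcases Finset.mem_insert.mp hx with rfl | hx
            · rw [Finset.mem_filter, Finset.mem_product, Finset.mem_compl]
              refine ⟨⟨hp, hq⟩, ?_⟩
              rw [hUadj]
              exact ⟨⟨n, hn⟩, Nat.lt_succ_self n, hadj⟩
            · rw [Finset.mem_filter] at hx ⊢
              exact ⟨hx.1, hUmono n (n + 1) (Nat.le_succ n) hx.2⟩
          calc cutSize (U n) S + 1
              = (insert (p, q) ((S ×ˢ Sᶜ).filter fun x => (U n).Adj x.1 x.2)).card := by
                rw [Finset.card_insert_of_notMem hnotmem, cutSize]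
            _ ≤ cutSize (U (n + 1)) S := Finset.card_le_card hsub
        have : min (n + 1) (cutSize G S) ≤ min n (cutSize G S) + 1 := by omega
        omega
      · -- all crossing edges of G are already in U n
        have hle : cutSize G S ≤ cutSize (U n) S := by
          apply Finset.card_le_card
          intro x hx
          rw [Finset.mem_filter] at hx ⊢
          refine ⟨hx.1, ?_⟩
          by_contra hnadj
          have hx1 := hx.1
          rw [Finset.mem_product, Finset.mem_compl] at hx1
          exact hres ⟨x.1, x.2, hx1.1, hx1.2,
            (SimpleGraph.sdiff_adj _ _ _ _).mpr ⟨hx.2, hnadj⟩⟩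
        have hmon : cutSize (U n) S ≤ cutSize (U (n + 1)) S :=
          cutSize_mono (hUmono n (n + 1) (Nat.le_succ n)) S
        have : min (n + 1) (cutSize G S) ≤ cutSize G S := min_le_right _ _
        omega
  have main : ∀ S : Finset V, min k (cutSize G S) ≤ cutSize H S := by
    intro S
    rw [hHU]
    exact key S k le_rfl
  refine ⟨main, ?_⟩
  constructor
  · rintro ⟨hGc, hGcut⟩
    constructor
    · -- H is connected since F 0 is a spanning tree of G
      have hU0 : U 0 = ⊥ := by
        ext a b
        rw [hUadj]
        simp
      have hF0 : IsSpanningForestOf (F ⟨0, hk⟩) G := by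
        have h1 := hUF ⟨0, hk⟩
        rwa [hU0, sdiff_bot] at h1
      have hreach : ∀ u v : V, G.Reachable u v → (F ⟨0, hk⟩).Reachable u v := by
        intro u v h
        obtain ⟨w⟩ := h
        induction w with
        | nil => exact SimpleGraph.Reachable.refl _
        | @cons a b c h p ih => exact (forest_reach hF0 h).trans ih
      have hF0c : (F ⟨0, hk⟩).Connected := by
        rw [SimpleGraph.connected_iff]
        exact ⟨fun u v => hreach u v (hGc.preconnected u v), ‹Nonempty V›⟩
      exact hF0c.mono (hH ▸ le_iSup F ⟨0, hk⟩)
    · intro S hS1 hS2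
      have h1 := main S
      have h2 := hGcut S hS1 hS2
      omega
  · rintro ⟨hHc, hHcut⟩
    refine ⟨hHc.mono hHle, fun S hS1 hS2 => le_trans (hHcut S hS1 hS2) (cutSize_mono hHle S)⟩
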